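/- Let F be a group and φ₁, φ₂ ∈ Aut(F), with suspensions G₁ = F ⋊_{φ₁} ℤ and G₂ = F ⋊_{φ₂} ℤ, fibers ι₁(F), ι₂(F) and transverse elements t₁, t₂. Then φ₁ and φ₂ are conjugate in Out(F) if and only if there exists a group isomorphism Ψ : G₁ → G₂ such that Ψ maps the fiber ι₁(F) onto the fiber ι₂(F) and Ψ(t₁) ∈ t₂·ι₂(F) (i.e., Ψ preserves the fiber and the orientation). -/

import Mathlib

open SemidirectProduct Multiplicative

private lemma susHom_aux {F : Type*} [Group F] (φ₁ φ₂ : MulAut F) (ψ : MulAut F) (f₀ : F)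
    (h : ∀ f : F, ψ (φ₁ f) = φ₂ (f₀⁻¹ * ψ f * f₀)) :
    ∃ Φ : F ⋊[zpowersHom (MulAut F) φ₁] Multiplicative ℤ →*
        F ⋊[zpowersHom (MulAut F) φ₂] Multiplicative ℤ,
      (∀ f : F, Φ (inl f) = inl (ψ f)) ∧
        Φ (inr (ofAdd 1)) = inr (ofAdd 1) * inl f₀⁻¹ := by
  set G₂ := F ⋊[zpowersHom (MulAut F) φ₂] Multiplicative ℤ
  set c : F ⋊[zpowersHom (MulAut F) φ₂] Multiplicative ℤ := inr (ofAdd 1) * inl f₀⁻¹ with hc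
  have key : ∀ f : F, c * inl (ψ f) * c⁻¹ = inl (ψ (φ₁ f)) := by
    intro f
    have h2 := inl_aut (φ := zpowersHom (MulAut F) φ₂) (ofAdd 1) (f₀⁻¹ * ψ f * f₀)
    rw [show (zpowersHom (MulAut F) φ₂) (ofAdd 1) = φ₂ by simp [zpowersHom_apply]] at h2
    rw [h f, h2, hc, map_mul, map_mul, map_inv]
    group
    rw [map_zpow]
  have key' : ∀ f : F, c⁻¹ * inl (ψ f) * c = inl (ψ (φ₁⁻¹ f)) := by
    intro f
    have := key (φ₁⁻¹ f)
    simp only [MulAut.apply_inv_self] at this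
    rw [← this]; group
  have main : ∀ (n : ℤ) (f : F),
      (inl (ψ ((φ₁ ^ n) f)) : G₂) = c ^ n * inl (ψ f) * (c ^ n)⁻¹ := by
    intro n
    induction n using Int.induction_on with
    | zero => simp
    | succ k ih =>
      intro f
      have : (φ₁ ^ ((k : ℤ) + 1)) f = (φ₁ ^ (k : ℤ)) (φ₁ f) := by
        rw [zpow_add_one]; rfl
      rw [this, ih (φ₁ f), ← key f]
      rw [zpow_add_one]
      group
    | pred k ih =>
      intro f
      have : (φ₁ ^ (-(k : ℤ) - 1)) f = (φ₁ ^ (-(k : ℤ))) (φ₁⁻¹ f) := by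
        rw [zpow_sub_one]; rfl
      rw [this, ih (φ₁⁻¹ f), ← key' f]
      rw [zpow_sub_one]
      group
  refine ⟨lift (inl.comp ψ.toMonoidHom) (zpowersHom G₂ c) ?_, ?_, ?_⟩
  · intro g
    refine MonoidHom.ext fun f => ?_
    simpa [zpowersHom_apply, ← map_zpow, MulAut.conj_apply] using main g.toAdd f
  · intro f; simp
  · simp [zpowersHom_apply, hc]

private lemma conj_aux {F : Type*} [Group F] (φ₁ φ₂ : MulAut F) :
    ((∃ (ψ : MulAut F) (f₀ : F), ∀ f : F, ψ (φ₁ f) = φ₂ (f₀⁻¹ * ψ f * f₀)) ↔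
      ∃ Ψ : (F ⋊[zpowersHom (MulAut F) φ₁] Multiplicative ℤ) ≃*
          (F ⋊[zpowersHom (MulAut F) φ₂] Multiplicative ℤ),
        Subgroup.map Ψ.toMonoidHom (inl : F →* _).range = (inl : F →* _).range ∧
        ∃ f : F, Ψ (inr (ofAdd 1)) = inr (ofAdd 1) * inl f) := by
  constructor
  · rintro ⟨ψ, f₀, h⟩
    obtain ⟨Φ, hΦl, hΦr⟩ := susHom_aux φ₁ φ₂ ψ f₀ h
    have h' : ∀ z : F, ψ⁻¹ (φ₂ z) =
        φ₁ (((ψ.symm f₀)⁻¹)⁻¹ * ψ⁻¹ z * (ψ.symm f₀)⁻¹) := by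
      intro z
      rw [MulAut.inv_def, inv_inv]
      have := h (ψ.symm (f₀ * z * f₀⁻¹))
      rw [MulEquiv.apply_symm_apply] at this
      have h2 : ψ (φ₁ (ψ.symm (f₀ * z * f₀⁻¹))) = φ₂ z := by
        rw [this]; group
      have h3 : φ₁ (ψ.symm (f₀ * z * f₀⁻¹)) = ψ.symm (φ₂ z) := by
        rw [← h2, MulEquiv.symm_apply_apply]
      rw [← h3]
      congr 1
      simp [map_mul]
    obtain ⟨Φ', hΦ'l, hΦ'r⟩ := susHom_aux φ₂ φ₁ ψ⁻¹ (ψ.symm f₀)⁻¹ h'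
    simp only [MulAut.inv_def, inv_inv] at hΦ'l hΦ'r
    have h1 : Φ'.comp Φ = MonoidHom.id _ := by
      apply hom_ext
      · refine MonoidHom.ext fun x => ?_
        show Φ' (Φ (inl x)) = inl x
        rw [hΦl, hΦ'l, MulEquiv.symm_apply_apply]
      · apply MonoidHom.ext_mint
        show Φ' (Φ (inr (ofAdd 1))) = inr (ofAdd 1)
        rw [hΦr, map_mul, hΦ'r, hΦ'l, map_inv, mul_assoc, ← map_mul]
        simp
    have h2 : Φ.comp Φ' = MonoidHom.id _ := by
      apply hom_ext
      · refine MonoidHom.ext fun x => ?_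
        show Φ (Φ' (inl x)) = inl x
        rw [hΦ'l, hΦl, MulEquiv.apply_symm_apply]
      · apply MonoidHom.ext_mint
        show Φ (Φ' (inr (ofAdd 1))) = inr (ofAdd 1)
        rw [hΦ'r, map_mul, hΦr, hΦl, MulEquiv.apply_symm_apply, mul_assoc, ← map_mul]
        simp
    refine ⟨MonoidHom.toMulEquiv Φ Φ' h1 h2, ?_, f₀⁻¹, hΦr⟩
    apply le_antisymm
    · rintro x hx
      rw [Subgroup.mem_map] at hx
      obtain ⟨y, ⟨g, rfl⟩, rfl⟩ := hx
      exact ⟨ψ g, (hΦl g).symm⟩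
    · rintro x ⟨g, rfl⟩
      rw [Subgroup.mem_map]
      refine ⟨inl (ψ.symm g), ⟨ψ.symm g, rfl⟩, ?_⟩
      show Φ (inl (ψ.symm g)) = inl g
      rw [hΦl, MulEquiv.apply_symm_apply]
  · rintro ⟨Ψ, hrange, f, hf⟩
    have hm : ∀ x : F, Ψ (inl x) = inl ((Ψ (inl x)).left) := by
      intro x
      have hx : Ψ.toMonoidHom (inl x) ∈ (inl : F →* _).range := by
        rw [← hrange]
        exact Subgroup.mem_map_of_mem _ ⟨x, rfl⟩
      obtain ⟨y, hy⟩ := hx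
      have hy' : inl y = Ψ (inl x) := hy
      rw [← hy', left_inl]
    have hm' : ∀ x : F, Ψ.symm (inl x) = inl ((Ψ.symm (inl x)).left) := by
      intro x
      have hx : (inl x : F ⋊[zpowersHom (MulAut F) φ₂] Multiplicative ℤ) ∈
          Subgroup.map Ψ.toMonoidHom (inl : F →* _).range := by
        rw [hrange]; exact ⟨x, rfl⟩
      rw [Subgroup.mem_map] at hx
      obtain ⟨y, ⟨g, rfl⟩, hy⟩ := hx
      have hg : Ψ.symm (inl x) = inl g := by
        rw [← hy]; exact Ψ.symm_apply_apply _
      rw [hg, left_inl]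
    have mul_left_inl : ∀ (u v : F),
        (inl u * inl v : F ⋊[zpowersHom (MulAut F) φ₂] Multiplicative ℤ).left = u * v := by
      intro u v; simp
    have mul_left_inl' : ∀ (u v : F),
        (inl u * inl v : F ⋊[zpowersHom (MulAut F) φ₁] Multiplicative ℤ).left = u * v := by
      intro u v; simp
    let ψmul : F →* F :=
      { toFun := fun x => (Ψ (inl x)).left
        map_one' := by
          show (Ψ (inl 1)).left = 1
          rw [map_one, map_one, one_left]
        map_mul' := fun a b => by
          show (Ψ (inl (a * b))).left = _
          rw [map_mul, map_mul, hm a, hm b, mul_left_inl, left_inl, left_inl] }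
    let χmul : F →* F :=
      { toFun := fun x => (Ψ.symm (inl x)).left
        map_one' := by
          show (Ψ.symm (inl 1)).left = 1
          rw [map_one, map_one, one_left]
        map_mul' := fun a b => by
          show (Ψ.symm (inl (a * b))).left = _
          rw [map_mul, map_mul, hm' a, hm' b, mul_left_inl', left_inl, left_inl] }
    have hc1 : χmul.comp ψmul = MonoidHom.id F := by
      refine MonoidHom.ext fun x => ?_
      show (Ψ.symm (inl ((Ψ (inl x)).left))).left = x
      rw [← hm x, Ψ.symm_apply_apply, left_inl]
    have hc2 : ψmul.comp χmul = MonoidHom.id F := by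
      refine MonoidHom.ext fun x => ?_
      show (Ψ (inl ((Ψ.symm (inl x)).left))).left = x
      rw [← hm' x, Ψ.apply_symm_apply, left_inl]
    refine ⟨MonoidHom.toMulEquiv ψmul χmul hc1 hc2, f⁻¹, fun f' => ?_⟩
    have hψ : ∀ x : F, Ψ (inl x) = inl (ψmul x) := hm
    have key1 : (inl (φ₁ f') : F ⋊[zpowersHom (MulAut F) φ₁] Multiplicative ℤ) =
        inr (ofAdd 1) * inl f' * (inr (ofAdd 1))⁻¹ := by
      have := inl_aut (φ := zpowersHom (MulAut F) φ₁) (ofAdd 1) f'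
      rw [show (zpowersHom (MulAut F) φ₁) (ofAdd 1) = φ₁ by simp [zpowersHom_apply],
        map_inv] at this
      exact this
    have key2 : ∀ z : F, (inl (φ₂ z) : F ⋊[zpowersHom (MulAut F) φ₂] Multiplicative ℤ) =
        inr (ofAdd 1) * inl z * (inr (ofAdd 1))⁻¹ := by
      intro z
      have := inl_aut (φ := zpowersHom (MulAut F) φ₂) (ofAdd 1) z
      rw [show (zpowersHom (MulAut F) φ₂) (ofAdd 1) = φ₂ by simp [zpowersHom_apply],
        map_inv] at this
      exact this
    have main : (inl (ψmul (φ₁ f')) : F ⋊[zpowersHom (MulAut F) φ₂] Multiplicative ℤ) =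
        inl (φ₂ (f⁻¹⁻¹ * ψmul f' * f⁻¹)) := by
      rw [← hψ, key1, map_mul, map_mul, map_inv, hf, hψ, key2, inv_inv]
      rw [map_mul, map_mul, map_inv]
      group
    exact inl_injective main

/-- Two automorphisms of `F` are conjugate in `Out(F)` if and only if there is an
isomorphism of the suspensions mapping the fiber onto the fiber and preserving the
orientation (`Ψ t₁ ∈ t₂ · ι₂(F)`). -/
theorem conj_out_iff_fiber_orientation_preserving_iso
    {F : Type*} [Group F] (φ₁ φ₂ : MulAut F) :
    let G₁ := F ⋊[zpowersHom (MulAut F) φ₁] Multiplicative ℤ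
    let G₂ := F ⋊[zpowersHom (MulAut F) φ₂] Multiplicative ℤ
    let ι₁ : F →* G₁ := SemidirectProduct.inl
    let ι₂ : F →* G₂ := SemidirectProduct.inl
    let t₁ : G₁ := SemidirectProduct.inr (Multiplicative.ofAdd 1)
    let t₂ : G₂ := SemidirectProduct.inr (Multiplicative.ofAdd 1)
    ((∃ (ψ : MulAut F) (f₀ : F), ∀ f : F, ψ (φ₁ f) = φ₂ (f₀⁻¹ * ψ f * f₀)) ↔
      ∃ Ψ : G₁ ≃* G₂, Subgroup.map Ψ.toMonoidHom ι₁.range = ι₂.range ∧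
        ∃ f : F, Ψ t₁ = t₂ * ι₂ f) := by
  intro G₁ G₂ ι₁ ι₂ t₁ t₂
  exact conj_aux φ₁ φ₂
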